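/- arXiv:2001.08767 — 2 statements merged into one kernel-verified Lean document; each statement's English description precedes it below -/
import Mathlib

section
/- There exist a bias parameter β ∈ [0,1), position discounts v, and two utility vectors w, w' on two items in two groups, such that no fixed constraint set K of rankings guarantees that the observed-utility-maximizing ranking within K attains the maximum latent utility for both w and w'. Concretely: with m = n = 2, v = (2,1), groups G_a = {1}, G_b = {2}, bias β_a = 1, β_b = 1/4, utilities w = (2,1) and w' = (1,2), and observed utilities ŵ_i = β_{group(i)} w_i, there is no set K of the two possible rankings such that argmax over K of observed utility equals the latent-utility optimum for both w and w'. -/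
open Finset

lemma perm_fin_two' (x : Equiv.Perm (Fin 2)) : x = 1 ∨ x = Equiv.swap 0 1 := by
  revert x; decide

/-- no fixed constraint set of rankings works for both utility vectors.
Items: `0 ∈ G_a` (bias `1`), `1 ∈ G_b` (bias `1/4`); `v = (2,1)`; `w = (2,1)`,
`w' = (1,2)`; observed utilities `ŵ = (2, 1/4)`, `ŵ' = (1, 1/2)`. A ranking is a
permutation `x` of `Fin 2` mapping items to positions, with utility
`∑ i, u i * v (x i)`. There is no nonempty set `K` of rankings such that, for both
utility profiles, some observed-utility maximizer within `K` attains the maximum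
latent utility. -/
theorem no_fixed_constraint_mitigates_bias :
    let v : Fin 2 → ℝ := ![2, 1]
    let w : Fin 2 → ℝ := ![2, 1]
    let w' : Fin 2 → ℝ := ![1, 2]
    let what : Fin 2 → ℝ := ![1 * 2, (1/4) * 1]
    let what' : Fin 2 → ℝ := ![1 * 1, (1/4) * 2]
    let U : (Fin 2 → ℝ) → Equiv.Perm (Fin 2) → ℝ := fun u x => ∑ i : Fin 2, u i * v (x i)
    ¬ ∃ K : Set (Equiv.Perm (Fin 2)), K.Nonempty ∧
        (∃ x ∈ K, (∀ y ∈ K, U what y ≤ U what x) ∧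
          ∀ z : Equiv.Perm (Fin 2), U w z ≤ U w x) ∧
        (∃ x ∈ K, (∀ y ∈ K, U what' y ≤ U what' x) ∧
          ∀ z : Equiv.Perm (Fin 2), U w' z ≤ U w' x) := by
  intro v w w' what what' U
  rintro ⟨K, hne, ⟨x1, hx1K, hx1obs, hx1lat⟩, ⟨x2, hx2K, hx2obs, hx2lat⟩⟩
  have h1 : x1 = 1 := by
    rcases perm_fin_two' x1 with h | h
    · exact h
    · exfalso
      have := hx1lat 1
      simp [h, U, v, w, Fin.sum_univ_two] at this
      norm_num at this
  have h2 : x2 = Equiv.swap 0 1 := by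
    rcases perm_fin_two' x2 with h | h
    · exfalso
      have := hx2lat (Equiv.swap 0 1)
      simp [h, U, v, w', Fin.sum_univ_two] at this
      norm_num at this
    · exact h
  have := hx2obs x1 hx1K
  simp [h1, h2, U, v, what', Fin.sum_univ_two] at this
  norm_num at this
end

section
/- Let S be a uniformly random m_b-subset of [m_a+m_b] with n ≤ min(m_a, m_b), and let N_{kb} = |S ∩ [k]| for k ≤ n. Then for all δ ≥ 2, P(N_{kb} ≤ E[N_{kb}] − δ) ≤ exp(−2(δ²−1)/(k+1)), where E[N_{kb}] = k·m_b/(m_a+m_b). -/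
open Finset

lemma vand_sum (a b r : ℕ) :
    ∑ j ∈ Finset.range (r+1), a.choose j * b.choose (r-j) = (a+b).choose r := by
  rw [Nat.add_choose_eq, Finset.Nat.sum_antidiagonal_eq_sum_range_succ_mk]

lemma count_inter (A B : Finset ℕ) (hAB : Disjoint A B) (r j : ℕ) (hjr : j ≤ r) :
    (((Finset.powersetCard r (A ∪ B)).filter (fun S => (S ∩ A).card = j)).card
      = A.card.choose j * B.card.choose (r-j)) := by
  rw [← Finset.card_powersetCard, ← Finset.card_powersetCard, ← Finset.card_product]
  apply Finset.card_bij' (fun S _ => (S ∩ A, S ∩ B))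
    (fun P _ => P.1 ∪ P.2)
  · intro S hS
    simp only [Finset.mem_filter, Finset.mem_powersetCard] at hS
    obtain ⟨⟨hsub, hcard⟩, hj⟩ := hS
    simp only [Finset.mem_product, Finset.mem_powersetCard]
    have h1 : S ∩ A ⊆ A := Finset.inter_subset_right
    have h2 : S ∩ B ⊆ B := Finset.inter_subset_right
    refine ⟨⟨h1, hj⟩, h2, ?_⟩
    have : (S ∩ A) ∪ (S ∩ B) = S := by
      rw [← Finset.inter_union_distrib_left]
      exact Finset.inter_eq_left.mpr hsub
    have hd : Disjoint (S ∩ A) (S ∩ B) :=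
      hAB.mono Finset.inter_subset_right Finset.inter_subset_right
    have := Finset.card_union_of_disjoint hd
    rw [‹(S ∩ A) ∪ (S ∩ B) = S›] at this
    omega
  · intro P hP
    simp only [Finset.mem_product, Finset.mem_powersetCard] at hP
    obtain ⟨⟨h1, h1c⟩, h2, h2c⟩ := hP
    simp only [Finset.mem_filter, Finset.mem_powersetCard]
    have hd : Disjoint P.1 P.2 := hAB.mono h1 h2
    constructor
    · constructor
      · exact Finset.union_subset_union h1 h2
      · rw [Finset.card_union_of_disjoint hd, h1c, h2c]; omega
    · rw [Finset.union_inter_distrib_right, Finset.inter_eq_left.mpr h1]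
      have : P.2 ∩ A = ∅ := by
        rw [← Finset.disjoint_iff_inter_eq_empty]
        exact (hAB.symm.mono h2 le_rfl)
      rw [this, Finset.union_empty, h1c]
  · intro S hS
    simp only [Finset.mem_filter, Finset.mem_powersetCard] at hS
    rw [← Finset.inter_union_distrib_left]
    exact Finset.inter_eq_left.mpr hS.1.1
  · intro P hP
    simp only [Finset.mem_product, Finset.mem_powersetCard] at hP
    obtain ⟨⟨h1, h1c⟩, h2, h2c⟩ := hP
    ext : 1
    · simp only
      rw [Finset.union_inter_distrib_right, Finset.inter_eq_left.mpr h1]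
      have : P.2 ∩ A = ∅ := by
        rw [← Finset.disjoint_iff_inter_eq_empty]
        exact (hAB.symm.mono h2 le_rfl)
      rw [this, Finset.union_empty]
    · simp only
      rw [Finset.union_inter_distrib_right, Finset.inter_eq_left.mpr h2]
      have : P.1 ∩ B = ∅ := by
        rw [← Finset.disjoint_iff_inter_eq_empty]
        exact (hAB.mono h1 le_rfl)
      rw [this, Finset.empty_union]

lemma vand_trunc (a b r : ℕ) (h : a ≤ r) :
    ∑ j ∈ Finset.range (a+1), a.choose j * b.choose (r-j) = (a+b).choose r := by
  rw [← vand_sum a b r]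
  apply Finset.sum_subset
  · intro x hx; simp only [Finset.mem_range] at *; omega
  · intro x _ hx
    simp only [Finset.mem_range, not_lt] at hx
    rw [Nat.choose_eq_zero_of_lt (by omega), Nat.zero_mul]

lemma nat_id1 (n r : ℕ) (hn : 1 ≤ n) : n * (n-1).choose r = (n - r) * n.choose r := by
  have h1 := Nat.add_one_mul_choose_eq (n-1) r
  rw [Nat.sub_add_cancel hn] at h1
  have h2 := Nat.choose_succ_right_eq n r
  rw [h1, h2, Nat.mul_comm]

-- mean identity: ∑ j * C(k,j) C(m-k, m_b-j) = k * C(m-1, m_b-1)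
lemma mean_sum (m_a m_b k : ℕ) (hka : k ≤ m_a) (hkb : k ≤ m_b) :
    ∑ j ∈ Finset.range (k+1), j * (k.choose j * (m_a + m_b - k).choose (m_b - j))
      = k * (m_a + m_b - 1).choose (m_b - 1) := by
  cases k with
  | zero => simp
  | succ k' =>
    rw [Finset.sum_range_succ']
    simp only [Nat.zero_mul, Nat.add_zero]
    have key : ∀ i, (i+1) * ((k'+1).choose (i+1) * (m_a + m_b - (k'+1)).choose (m_b - (i+1)))
        = (k'+1) * (k'.choose i * ((m_a + m_b - 1) - k').choose ((m_b - 1) - i)) := by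
      intro i
      have h1 := Nat.add_one_mul_choose_eq k' i
      have e1 : m_a + m_b - (k'+1) = (m_a + m_b - 1) - k' := by omega
      have e2 : m_b - (i+1) = (m_b - 1) - i := by omega
      rw [e1, e2]
      calc (i+1) * ((k'+1).choose (i+1) * ((m_a + m_b - 1) - k').choose ((m_b - 1) - i))
          = ((k'+1).choose (i+1) * (i+1)) * ((m_a + m_b - 1) - k').choose ((m_b - 1) - i) := by ring
        _ = ((k'+1) * k'.choose i) * ((m_a + m_b - 1) - k').choose ((m_b - 1) - i) := by
            rw [← h1]
        _ = _ := by ring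
    rw [Finset.sum_congr rfl (fun i _ => key i), ← Finset.mul_sum]
    congr 1
    have := vand_trunc k' ((m_a + m_b - 1) - k') (m_b - 1) (by omega)
    rw [this]
    congr 1
    omega

lemma total_sum (m_a m_b k : ℕ) (hka : k ≤ m_a) (hkb : k ≤ m_b) :
    ∑ j ∈ Finset.range (k+1), k.choose j * (m_a + m_b - k).choose (m_b - j)
      = (m_a + m_b).choose m_b := by
  have := vand_trunc k (m_a + m_b - k) m_b (by omega)
  rw [this]
  congr 1
  omega

-- key recurrence step identities
lemma rec_zero (m_a m_b k : ℕ) (hka : k + 1 ≤ m_a) (hkb : k + 1 ≤ m_b) :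
    (m_a + m_b - k) * ((k+1).choose 0 * (m_a + m_b - (k+1)).choose m_b)
      = (m_a - k) * (k.choose 0 * (m_a + m_b - k).choose m_b) := by
  simp only [Nat.choose_zero_right, Nat.one_mul]
  have e1 : m_a + m_b - (k+1) = (m_a + m_b - k) - 1 := by omega
  rw [e1, nat_id1 (m_a + m_b - k) m_b (by omega)]
  congr 1
  omega

lemma rec_succ (m_a m_b k i : ℕ) (hka : k + 1 ≤ m_a) (hkb : k + 1 ≤ m_b) (hik : i ≤ k) :
    (m_a + m_b - k) * ((k+1).choose (i+1) * (m_a + m_b - (k+1)).choose (m_b - (i+1)))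
      = (m_a - k + i + 1) * (k.choose (i+1) * (m_a + m_b - k).choose (m_b - (i+1)))
        + (m_b - i) * (k.choose i * (m_a + m_b - k).choose (m_b - i)) := by
  obtain ⟨a, ha⟩ : ∃ a, m_a = k + 1 + a := ⟨m_a - (k+1), by omega⟩
  obtain ⟨c, hc⟩ : ∃ c, m_b = i + 1 + c := ⟨m_b - (i+1), by omega⟩
  subst ha hc
  have e1 : k + 1 + a + (i + 1 + c) - k = a + i + c + 2 := by omega
  have e2 : k + 1 + a + (i + 1 + c) - (k + 1) = a + i + c + 1 := by omega
  have e3 : i + 1 + c - (i + 1) = c := by omega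
  have e4 : k + 1 + a - k = a + 1 := by omega
  have e5 : i + 1 + c - i = c + 1 := by omega
  rw [e1, e2, e3, e4, e5]
  have h1 : (a+i+c+2) * (a+i+c+1).choose c = (a+i+2) * (a+i+c+2).choose c := by
    have := nat_id1 (a+i+c+2) c (by omega)
    have e : a+i+c+2-1 = a+i+c+1 := by omega
    have e' : a+i+c+2-c = a+i+2 := by omega
    rw [e, e'] at this; exact this
  have h2 : (a+i+c+2).choose (c+1) * (c+1) = (a+i+c+2).choose c * (a+i+2) := by
    have := Nat.choose_succ_right_eq (a+i+c+2) c
    have e' : a+i+c+2-c = a+i+2 := by omega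
    rw [e'] at this; exact this
  have h3 : (k+1).choose (i+1) = k.choose i + k.choose (i+1) := by
    rw [Nat.choose_succ_succ]
  calc (a+i+c+2) * ((k+1).choose (i+1) * (a+i+c+1).choose c)
      = (k.choose i + k.choose (i+1)) * ((a+i+c+2) * (a+i+c+1).choose c) := by rw [h3]; ring
    _ = (k.choose i + k.choose (i+1)) * ((a+i+2) * (a+i+c+2).choose c) := by rw [h1]
    _ = (a + 1 + i + 1) * (k.choose (i+1) * (a+i+c+2).choose c)
        + (k.choose i * ((a+i+c+2).choose c * (a+i+2))) := by ring
    _ = _ := by rw [← h2]; ring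

lemma cheb_weighted (n : ℕ) (w u g : ℕ → ℝ) (hw : ∀ i, 0 ≤ w i)
    (hu : ∀ i j, i ≤ j → u j ≤ u i) (hg : ∀ i j, i ≤ j → g i ≤ g j) :
    (∑ i ∈ Finset.range n, w i) * (∑ i ∈ Finset.range n, w i * u i * g i)
      ≤ (∑ i ∈ Finset.range n, w i * u i) * (∑ i ∈ Finset.range n, w i * g i) := by
  have key : 0 ≤ ∑ i ∈ Finset.range n, ∑ j ∈ Finset.range n,
      w i * w j * ((u i - u j) * (g j - g i)) := by
    apply Finset.sum_nonneg; intro i _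
    apply Finset.sum_nonneg; intro j _
    apply mul_nonneg (mul_nonneg (hw i) (hw j))
    rcases le_total i j with h | h
    · exact mul_nonneg (by linarith [hu i j h]) (by linarith [hg i j h])
    · nlinarith [hu j i h, hg j i h]
  have expand : ∑ i ∈ Finset.range n, ∑ j ∈ Finset.range n,
      w i * w j * ((u i - u j) * (g j - g i))
      = 2 * ((∑ i ∈ Finset.range n, w i * u i) * (∑ i ∈ Finset.range n, w i * g i)
        - (∑ i ∈ Finset.range n, w i) * (∑ i ∈ Finset.range n, w i * u i * g i)) := by
    have h1 : ∀ i j : ℕ, w i * w j * ((u i - u j) * (g j - g i))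
        = (w i * u i) * (w j * g j) - (w i * u i * g i) * w j
          - w i * (w j * u j * g j) + w i * (w j * u j) * g i := by
      intro i j; ring
    simp only [h1]
    simp only [Finset.sum_add_distrib, Finset.sum_sub_distrib,
      ← Finset.sum_mul, ← Finset.mul_sum]
    have h2 : ∑ x ∈ Finset.range n, (w x * (∑ i ∈ Finset.range n, w i * u i)) * g x
        = (∑ i ∈ Finset.range n, w i * u i) * ∑ i ∈ Finset.range n, w i * g i := by
      rw [Finset.mul_sum]; apply Finset.sum_congr rfl; intros; ring
    rw [h2]; ring
  linarith

lemma hoeffding_scalar (p : ℝ) (hp0 : 0 ≤ p) (hp1 : p ≤ 1) (s : ℝ) (hs : s ≤ 0) :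
    (1 - p) + p * Real.exp s ≤ Real.exp (p * s + s^2 / 8) := by
  rcases eq_or_lt_of_le hp0 with h0 | h0
  · rw [← h0]
    simp only [sub_zero, zero_mul, add_zero, zero_add]
    calc (1:ℝ) = Real.exp 0 := (Real.exp_zero).symm
      _ ≤ _ := Real.exp_le_exp.mpr (by nlinarith [sq_nonneg s])
  rcases eq_or_lt_of_le hp1 with h1 | h1
  · subst h1
    simp only [sub_self, zero_add, one_mul]
    exact Real.exp_le_exp.mpr (by nlinarith [sq_nonneg s])
  -- main case 0 < p < 1
  obtain ⟨q, hq⟩ : ∃ q' : ℝ, q' = 1 - p := ⟨_, rfl⟩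
  rw [← hq]
  have hq0 : 0 < q := by rw [hq]; linarith
  have hD : ∀ t : ℝ, 0 < q + p * Real.exp t := fun t => by positivity
  set φ : ℝ → ℝ := fun t => p * t + t^2/8 - Real.log (q + p * Real.exp t) with hφdef
  set φ' : ℝ → ℝ := fun t => p + t/4 - p * Real.exp t / (q + p * Real.exp t) with hφ'def
  have hDd : ∀ t : ℝ, HasDerivAt (fun t => q + p * Real.exp t) (p * Real.exp t) t := by
    intro t
    simpa using ((Real.hasDerivAt_exp t).const_mul p).const_add q
  have hφd : ∀ t : ℝ, HasDerivAt φ (φ' t) t := by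
    intro t
    have h1 : HasDerivAt (fun t : ℝ => p * t) p t := by
      simpa using (hasDerivAt_id t).const_mul p
    have h2 : HasDerivAt (fun t : ℝ => t^2/8) (t/4) t := by
      have := (hasDerivAt_pow 2 t).div_const 8
      exact this.congr_deriv (by norm_num; ring)
    have h3 : HasDerivAt (fun t => Real.log (q + p * Real.exp t))
        (p * Real.exp t / (q + p * Real.exp t)) t := (hDd t).log (ne_of_gt (hD t))
    exact ((h1.add h2).sub h3)
  have hφ'd : ∀ t : ℝ, HasDerivAt φ'
      (1/4 - p * q * Real.exp t / (q + p * Real.exp t)^2) t := by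
    intro t
    have h1 : HasDerivAt (fun t : ℝ => p + t/4) (1/4) t := by
      simpa using ((hasDerivAt_id t).div_const 4).const_add p
    have h2 : HasDerivAt (fun t => p * Real.exp t / (q + p * Real.exp t))
        ((p * Real.exp t * (q + p * Real.exp t) - p * Real.exp t * (p * Real.exp t))
          / (q + p * Real.exp t)^2) t := by
      exact ((Real.hasDerivAt_exp t).const_mul p).div (hDd t) (ne_of_gt (hD t))
    have e : (p * Real.exp t * (q + p * Real.exp t) - p * Real.exp t * (p * Real.exp t))
          / (q + p * Real.exp t)^2 = p * q * Real.exp t / (q + p * Real.exp t)^2 := by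
      congr 1; ring
    rw [e] at h2
    exact h1.sub h2
  have hφ'mono : Monotone φ' := by
    apply monotone_of_deriv_nonneg
    · intro t; exact (hφ'd t).differentiableAt
    · intro t
      rw [(hφ'd t).deriv]
      have he : 0 < Real.exp t := Real.exp_pos t
      have hX : p * q * Real.exp t / (q + p * Real.exp t)^2 ≤ 1/4 := by
        rw [div_le_iff₀ (by positivity)]
        nlinarith [sq_nonneg (q - p * Real.exp t)]
      linarith [hX]
  have hφ'0 : φ' 0 = 0 := by
    simp only [hφ'def, Real.exp_zero, mul_one]
    rw [show q + p = 1 by rw [hq]; ring]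
    norm_num
  have hφ'nonpos : ∀ t ∈ Set.Iio (0:ℝ), deriv φ t ≤ 0 := by
    intro t ht
    rw [(hφd t).deriv]
    have := hφ'mono (le_of_lt ht)
    rw [hφ'0] at this
    exact this
  have hanti : AntitoneOn φ (Set.Iic 0) := by
    apply antitoneOn_of_deriv_nonpos (convex_Iic 0)
    · exact Continuous.continuousOn (by
        fun_prop (disch := intro t; exact (ne_of_gt (hD t))) )
    · intro t ht
      exact (hφd t).differentiableAt.differentiableWithinAt
    · intro t ht
      rw [interior_Iic] at ht
      exact hφ'nonpos t ht
  have hφ0 : φ 0 = 0 := by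
    simp only [hφdef, Real.exp_zero, mul_one, mul_zero]
    rw [show q + p = 1 by rw [hq]; ring]
    simp
  have hφs : 0 ≤ φ s := by
    have := hanti (Set.mem_Iic.mpr hs) (Set.mem_Iic.mpr le_rfl) hs
    rw [hφ0] at this
    exact this
  have hlog : Real.log (q + p * Real.exp s) ≤ p * s + s^2/8 := by
    simp only [hφdef] at hφs
    linarith
  calc q + p * Real.exp s = Real.exp (Real.log (q + p * Real.exp s)) :=
        (Real.exp_log (hD s)).symm
    _ ≤ _ := Real.exp_le_exp.mpr hlog

lemma mgf_bound (m_a m_b : ℕ) (x : ℝ) (hx0 : 0 < x) (hx1 : x ≤ 1) :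
    ∀ k, k ≤ m_a → k ≤ m_b →
    ∑ j ∈ Finset.range (k+1),
        ((k.choose j * (m_a + m_b - k).choose (m_b - j) : ℕ) : ℝ) * x^j
      ≤ ((m_a + m_b).choose m_b : ℝ)
        * (((m_a : ℝ) + (m_b : ℝ) * x) / ((m_a : ℝ) + (m_b : ℝ)))^k := by
  intro k
  induction k with
  | zero => intro _ _; simp
  | succ k ih =>
    intro hka hkb
    have hka' : k ≤ m_a := Nat.le_of_succ_le hka
    have hkb' : k ≤ m_b := Nat.le_of_succ_le hkb
    -- abbreviations
    set F : ℕ → ℝ := fun j => ((k.choose j * (m_a + m_b - k).choose (m_b - j) : ℕ) : ℝ)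
      with hF
    set c : ℕ → ℝ :=
      fun j => (((k+1).choose j * (m_a + m_b - (k+1)).choose (m_b - j) : ℕ) : ℝ) with hc
    set A : ℝ := (m_a : ℝ) + (m_b : ℝ) - (k : ℝ) with hAdef
    have hA0 : 0 < A := by
      rw [hAdef]
      have h1 : (k:ℝ) + 1 ≤ (m_a:ℝ) := by exact_mod_cast hka
      have h2 : (0:ℝ) ≤ (m_b:ℝ) := Nat.cast_nonneg _
      linarith
    have hAcast : ((m_a + m_b - k : ℕ) : ℝ) = A := by
      rw [hAdef, Nat.cast_sub (by omega)]; push_cast; ring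
    set g : ℕ → ℝ :=
      fun j => (((m_a : ℝ) - k + j) + ((m_b : ℝ) - j) * x) / A with hg
    set u : ℕ → ℝ := fun j => ((m_a : ℝ) - k + j) * F j * x^j with hu
    set v : ℕ → ℝ := fun j => ((m_b : ℝ) - j) * F j * x^j with hv
    -- cast facts for rec identities
    have eqsucc : ∀ i, i ≤ k → A * (c (i+1) * x^(i+1)) = u (i+1) + x * v i := by
      intro i hik
      have hnat := rec_succ m_a m_b k i hka hkb hik
      have hcast : A * c (i+1) = ((m_a:ℝ) - k + (i+1)) * F (i+1) + ((m_b:ℝ) - i) * F i := by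
        have h := congrArg (fun (z : ℕ) => (z : ℝ)) hnat
        push_cast [Nat.cast_sub (show k ≤ m_a by omega),
          Nat.cast_sub (show k ≤ m_a + m_b by omega),
          Nat.cast_sub (show i ≤ m_b by omega)] at h
        simp only [hF, hc, hAdef]
        push_cast
        linear_combination h
      calc A * (c (i+1) * x^(i+1)) = (A * c (i+1)) * x^(i+1) := by ring
        _ = (((m_a:ℝ) - k + (i+1)) * F (i+1) + ((m_b:ℝ) - i) * F i) * x^(i+1) := by
            rw [hcast]
        _ = u (i+1) + x * v i := by rw [hu, hv]; push_cast; ring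
    have eqzero : A * (c 0 * x^0) = u 0 := by
      have hnat := rec_zero m_a m_b k hka hkb
      have hcast : A * c 0 = ((m_a:ℝ) - k) * F 0 := by
        have h := congrArg (fun (z : ℕ) => (z : ℝ)) hnat
        push_cast [Nat.cast_sub (show k ≤ m_a by omega),
          Nat.cast_sub (show k ≤ m_a + m_b by omega)] at h
        simp only [hF, hc, hAdef, Nat.sub_zero]
        push_cast
        linear_combination h
      rw [hu]
      calc A * (c 0 * x^0) = (A * c 0) * x^0 := by ring
        _ = (((m_a:ℝ) - k) * F 0) * x^0 := by rw [hcast]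
        _ = ((m_a:ℝ) - k + (0:ℕ)) * F 0 * x^0 := by push_cast; ring
    -- u (k+1) = 0
    have hutop : u (k+1) = 0 := by
      rw [hu, hF]
      simp [Nat.choose_succ_self]
    -- key1 : LHS = ∑ F x^j g j
    have key1 : ∑ j ∈ Finset.range (k+2), c j * x^j
        = ∑ j ∈ Finset.range (k+1), F j * x^j * g j := by
      apply mul_left_cancel₀ (ne_of_gt hA0)
      rw [Finset.mul_sum, Finset.mul_sum]
      have lhs_eq : ∑ j ∈ Finset.range (k+2), A * (c j * x^j)
          = ∑ i ∈ Finset.range (k+1), (u (i+1) + x * v i) + u 0 := by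
        rw [Finset.sum_range_succ']
        congr 1
        apply Finset.sum_congr rfl
        intro i hi
        exact eqsucc i (by simpa using Nat.lt_succ_iff.mp (Finset.mem_range.mp hi))
      rw [lhs_eq]
      have rhs_eq : ∀ j ∈ Finset.range (k+1),
          A * (F j * x^j * g j) = u j + x * v j := by
        intro j _
        rw [hg, hu, hv]
        field_simp
      rw [Finset.sum_congr rfl rhs_eq]
      have e1 : ∑ i ∈ Finset.range (k+1), u (i+1) + u 0 = ∑ j ∈ Finset.range (k+1), u j := by
        rw [← Finset.sum_range_succ' u (k+1), Finset.sum_range_succ, hutop, add_zero]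
      calc ∑ i ∈ Finset.range (k+1), (u (i+1) + x * v i) + u 0
          = (∑ i ∈ Finset.range (k+1), u (i+1) + u 0)
            + ∑ i ∈ Finset.range (k+1), x * v i := by
            rw [Finset.sum_add_distrib]; ring
        _ = ∑ j ∈ Finset.range (k+1), u j + ∑ j ∈ Finset.range (k+1), x * v j := by rw [e1]
        _ = ∑ j ∈ Finset.range (k+1), (u j + x * v j) := (Finset.sum_add_distrib).symm
    -- sums facts
    have hS0 : ∑ j ∈ Finset.range (k+1), F j = ((m_a + m_b).choose m_b : ℝ) := by
      simp only [hF]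
      rw [← Nat.cast_sum, total_sum m_a m_b k hka' hkb']
    have hS1 : ∑ j ∈ Finset.range (k+1), (j:ℝ) * F j
        = (k:ℝ) * ((m_a + m_b - 1).choose (m_b - 1) : ℝ) := by
      simp only [hF]
      exact_mod_cast congrArg (fun (z:ℕ) => (z:ℝ)) (mean_sum m_a m_b k hka' hkb')
    have hm0 : (0:ℝ) < (m_a:ℝ) + m_b := by
      have h1 : (1:ℝ) ≤ (m_a:ℝ) := by exact_mod_cast Nat.one_le_iff_ne_zero.mpr (by omega)
      have h2 : (0:ℝ) ≤ (m_b:ℝ) := Nat.cast_nonneg _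
      linarith
    have hC1 : ((m_a:ℝ) + m_b) * ((m_a + m_b - 1).choose (m_b - 1) : ℝ)
        = (m_b : ℝ) * ((m_a + m_b).choose m_b : ℝ) := by
      have h := Nat.add_one_mul_choose_eq (m_a + m_b - 1) (m_b - 1)
      have e1 : (m_a + m_b - 1) + 1 = m_a + m_b := by omega
      have e2 : (m_b - 1) + 1 = m_b := by omega
      rw [e1, e2] at h
      exact_mod_cast h.trans (Nat.mul_comm _ _)
    have key3 : ∑ j ∈ Finset.range (k+1), F j * g j
        = ((m_a + m_b).choose m_b : ℝ) * (((m_a:ℝ) + (m_b:ℝ) * x) / ((m_a:ℝ) + (m_b:ℝ))) := by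
      have expand : ∀ j ∈ Finset.range (k+1), F j * g j
          = (((m_a:ℝ) - k) * F j + (1 - x) * ((j:ℝ) * F j) + x * (m_b:ℝ) * F j) / A := by
        intro j _
        rw [hg]
        field_simp
        ring
      rw [Finset.sum_congr rfl expand, ← Finset.sum_div, Finset.sum_add_distrib,
        Finset.sum_add_distrib, ← Finset.mul_sum, ← Finset.mul_sum, ← Finset.mul_sum,
        hS0, hS1, hAdef]
      have hA0' : (m_a:ℝ) + (m_b:ℝ) - (k:ℝ) ≠ 0 := by rw [← hAdef]; exact ne_of_gt hA0
      have hm0' : (m_a:ℝ) + (m_b:ℝ) ≠ 0 := ne_of_gt hm0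
      field_simp
      linear_combination ((1 - x) * (k:ℝ)) * hC1
    -- Chebyshev
    have hu_mono : ∀ i j : ℕ, i ≤ j → x^j ≤ x^i := fun i j hij =>
      pow_le_pow_of_le_one (le_of_lt hx0) hx1 hij
    have hg_mono : ∀ i j : ℕ, i ≤ j → g i ≤ g j := by
      intro i j hij
      rw [hg]
      apply (div_le_div_iff_of_pos_right hA0).mpr
      have hij' : (i:ℝ) ≤ (j:ℝ) := Nat.cast_le.mpr hij
      nlinarith [mul_nonneg (sub_nonneg.mpr hij') (sub_nonneg.mpr hx1)]
    have hFnn : ∀ i, 0 ≤ F i := by intro i; rw [hF]; exact Nat.cast_nonneg _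
    have cheb := cheb_weighted (k+1) F (fun j => x^j) g hFnn hu_mono hg_mono
    rw [hS0, key3] at cheb
    have hC0 : (0:ℝ) < ((m_a + m_b).choose m_b : ℝ) := by
      exact_mod_cast Nat.choose_pos (show m_b ≤ m_a + m_b by omega)
    have ht0 : 0 ≤ ((m_a:ℝ) + (m_b:ℝ) * x) / ((m_a:ℝ) + (m_b:ℝ)) := by positivity
    have ihF : ∑ j ∈ Finset.range (k+1), F j * x^j
        ≤ ((m_a + m_b).choose m_b : ℝ)
          * (((m_a:ℝ) + (m_b:ℝ) * x) / ((m_a:ℝ) + (m_b:ℝ)))^k := by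
      simpa only [hF] using ih hka' hkb'
    have goal_eq : ∑ j ∈ Finset.range (k+1+1),
        (((k+1).choose j * (m_a + m_b - (k+1)).choose (m_b - j) : ℕ) : ℝ) * x^j
        = ∑ j ∈ Finset.range (k+2), c j * x^j := by
      simp only [hc]
    rw [goal_eq, key1]
    have step1 : ((m_a + m_b).choose m_b : ℝ) * (∑ j ∈ Finset.range (k+1), F j * x^j * g j)
        ≤ ((m_a + m_b).choose m_b : ℝ) * ((∑ j ∈ Finset.range (k+1), F j * x^j)
            * (((m_a:ℝ) + (m_b:ℝ) * x) / ((m_a:ℝ) + (m_b:ℝ)))) := by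
      calc ((m_a + m_b).choose m_b : ℝ) * (∑ j ∈ Finset.range (k+1), F j * x^j * g j)
          ≤ (∑ j ∈ Finset.range (k+1), F j * x^j)
              * (((m_a + m_b).choose m_b : ℝ)
                * (((m_a:ℝ) + (m_b:ℝ) * x) / ((m_a:ℝ) + (m_b:ℝ)))) := cheb
        _ = _ := by ring
    have step2 : ∑ j ∈ Finset.range (k+1), F j * x^j * g j
        ≤ (∑ j ∈ Finset.range (k+1), F j * x^j)
            * (((m_a:ℝ) + (m_b:ℝ) * x) / ((m_a:ℝ) + (m_b:ℝ))) :=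
      (mul_le_mul_iff_right₀ hC0).mp step1
    calc ∑ j ∈ Finset.range (k+1), F j * x^j * g j
        ≤ (∑ j ∈ Finset.range (k+1), F j * x^j)
            * (((m_a:ℝ) + (m_b:ℝ) * x) / ((m_a:ℝ) + (m_b:ℝ))) := step2
      _ ≤ (((m_a + m_b).choose m_b : ℝ)
            * (((m_a:ℝ) + (m_b:ℝ) * x) / ((m_a:ℝ) + (m_b:ℝ)))^k)
          * (((m_a:ℝ) + (m_b:ℝ) * x) / ((m_a:ℝ) + (m_b:ℝ))) :=
          mul_le_mul_of_nonneg_right ihF ht0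
      _ = ((m_a + m_b).choose m_b : ℝ)
            * (((m_a:ℝ) + (m_b:ℝ) * x) / ((m_a:ℝ) + (m_b:ℝ)))^(k+1) := by
          rw [pow_succ]; ring

/-- hypergeometric lower tail, Hush–Scovel: for a uniformly random
`m_b`-subset `S` of `{1, …, m_a + m_b}` with `n ≤ min(m_a, m_b)` and `k ≤ n`, the
count `N_kb = |S ∩ [k]|` with mean `k m_b/(m_a + m_b)` satisfies, for all `δ ≥ 2`,
`P(N_kb ≤ E[N_kb] - δ) ≤ exp(-2(δ² - 1)/(k+1))`. -/
theorem hypergeometric_lower_tail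
    (m_a m_b n k : ℕ) (hn : n ≤ min m_a m_b) (hk : k ≤ n)
    (δ : ℝ) (hδ : 2 ≤ δ) :
    (((Finset.powersetCard m_b (Finset.Icc 1 (m_a + m_b))).filter
        (fun S => ((S ∩ Finset.Icc 1 k).card : ℝ)
          ≤ (k : ℝ) * (m_b : ℝ) / ((m_a : ℝ) + (m_b : ℝ)) - δ)).card : ℝ)
      / ((Finset.powersetCard m_b (Finset.Icc 1 (m_a + m_b))).card : ℝ)
    ≤ Real.exp (-(2 * (δ ^ 2 - 1)) / ((k : ℝ) + 1)) := by
  have hka : k ≤ m_a := le_trans hk (le_trans hn (min_le_left _ _))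
  have hkb : k ≤ m_b := le_trans hk (le_trans hn (min_le_right _ _))
  set μ : ℝ := (k : ℝ) * (m_b : ℝ) / ((m_a : ℝ) + (m_b : ℝ)) with hμ
  set T := Finset.powersetCard m_b (Finset.Icc 1 (m_a + m_b)) with hT
  by_cases hemp : (T.filter (fun S => ((S ∩ Finset.Icc 1 k).card : ℝ) ≤ μ - δ)) = ∅
  · rw [hemp]
    simp only [Finset.card_empty, Nat.cast_zero, zero_div]
    positivity
  -- nonempty case
  obtain ⟨S₀, hS₀⟩ := Finset.nonempty_iff_ne_empty.mpr hemp
  rw [Finset.mem_filter] at hS₀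
  have hδμ : δ ≤ μ := by
    have h0 : (0:ℝ) ≤ ((S₀ ∩ Finset.Icc 1 k).card : ℝ) := Nat.cast_nonneg _
    linarith [hS₀.2]
  have hk1 : 1 ≤ k := by
    by_contra h
    have hk0 : k = 0 := by omega
    rw [hk0] at hμ
    simp at hμ
    rw [hμ] at hδμ
    linarith
  have hm0 : (0:ℝ) < (m_a:ℝ) + (m_b:ℝ) := by
    have : (1:ℝ) ≤ (m_b:ℝ) := by exact_mod_cast le_trans hk1 hkb
    have : (0:ℝ) ≤ (m_a:ℝ) := Nat.cast_nonneg _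
    linarith
  -- counting
  have hAB : Disjoint (Finset.Icc 1 k) (Finset.Icc (k+1) (m_a + m_b)) := by
    rw [Finset.disjoint_left]
    intro a ha hb
    simp only [Finset.mem_Icc] at ha hb
    omega
  have hunion : Finset.Icc 1 (m_a + m_b) = Finset.Icc 1 k ∪ Finset.Icc (k+1) (m_a + m_b) := by
    ext a
    simp only [Finset.mem_Icc, Finset.mem_union]
    omega
  have hcardA : (Finset.Icc 1 k).card = k := by rw [Nat.card_Icc]; omega
  have hcardB : (Finset.Icc (k+1) (m_a + m_b)).card = m_a + m_b - k := by
    rw [Nat.card_Icc]; omega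
  have hcount : ∀ j, j ≤ m_b →
      ((T.filter (fun S => (S ∩ Finset.Icc 1 k).card = j)).card
        = k.choose j * (m_a + m_b - k).choose (m_b - j)) := by
    intro j hj
    have := count_inter (Finset.Icc 1 k) (Finset.Icc (k+1) (m_a + m_b)) hAB m_b j hj
    rw [← hunion, hcardA, hcardB] at this
    rw [hT]
    exact this
  set J := (Finset.range (k+1)).filter (fun j : ℕ => (j:ℝ) ≤ μ - δ) with hJ
  have hdecomp : (T.filter (fun S => ((S ∩ Finset.Icc 1 k).card : ℝ) ≤ μ - δ))
      = J.biUnion (fun j => T.filter (fun S => (S ∩ Finset.Icc 1 k).card = j)) := by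
    ext S
    simp only [Finset.mem_filter, Finset.mem_biUnion, hJ, Finset.mem_range]
    constructor
    · rintro ⟨hST, hcond⟩
      refine ⟨(S ∩ Finset.Icc 1 k).card, ⟨?_, hcond⟩, hST, rfl⟩
      have hsub : S ∩ Finset.Icc 1 k ⊆ Finset.Icc 1 k := Finset.inter_subset_right
      have := Finset.card_le_card hsub
      rw [hcardA] at this
      omega
    · rintro ⟨j, ⟨_, hcond⟩, hST, hcard⟩
      exact ⟨hST, by rw [hcard]; exact hcond⟩
  have hdisj : ∀ a ∈ J, ∀ b ∈ J, a ≠ b →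
      Disjoint (T.filter (fun S => (S ∩ Finset.Icc 1 k).card = a))
        (T.filter (fun S => (S ∩ Finset.Icc 1 k).card = b)) := by
    intro a _ b _ hab
    rw [Finset.disjoint_left]
    intro S hSa hSb
    rw [Finset.mem_filter] at hSa hSb
    exact hab (hSa.2 ▸ hSb.2 ▸ rfl)
  have hnum : (T.filter (fun S => ((S ∩ Finset.Icc 1 k).card : ℝ) ≤ μ - δ)).card
      = ∑ j ∈ J, k.choose j * (m_a + m_b - k).choose (m_b - j) := by
    rw [hdecomp, Finset.card_biUnion hdisj]
    apply Finset.sum_congr rfl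
    intro j hj
    rw [hJ, Finset.mem_filter, Finset.mem_range] at hj
    exact hcount j (by omega)
  -- real-side bound
  set lam : ℝ := 4 * δ / k with hlam
  have hkR : (0:ℝ) < (k:ℝ) := by exact_mod_cast hk1
  have hlam0 : 0 < lam := by rw [hlam]; positivity
  set x : ℝ := Real.exp (-lam) with hx
  have hx0 : 0 < x := Real.exp_pos _
  have hx1 : x ≤ 1 := by
    rw [hx, Real.exp_le_one_iff]
    linarith
  have hfbound : ∀ j ∈ J, ((k.choose j * (m_a + m_b - k).choose (m_b - j) : ℕ) : ℝ)
      ≤ Real.exp (lam * (μ - δ)) * (((k.choose j * (m_a + m_b - k).choose (m_b - j) : ℕ) : ℝ) * x^j) := by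
    intro j hj
    rw [hJ, Finset.mem_filter] at hj
    have hjle : (j:ℝ) ≤ μ - δ := hj.2
    have hxj : x^j = Real.exp (-(lam * j)) := by
      rw [hx, ← Real.exp_nat_mul]
      congr 1
      ring
    rw [hxj, ← mul_assoc, mul_comm (Real.exp _), mul_assoc, ← Real.exp_add]
    have h1 : (1:ℝ) ≤ Real.exp (lam * (μ - δ) + -(lam * j)) := by
      rw [← Real.exp_zero]
      apply Real.exp_le_exp.mpr
      have : lam * (j:ℝ) ≤ lam * (μ - δ) := by
        apply mul_le_mul_of_nonneg_left hjle (le_of_lt hlam0)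
      linarith
    have h0 : (0:ℝ) ≤ ((k.choose j * (m_a + m_b - k).choose (m_b - j) : ℕ) : ℝ) :=
      Nat.cast_nonneg _
    nlinarith [h0, h1]
  have hsumJ : ((∑ j ∈ J, k.choose j * (m_a + m_b - k).choose (m_b - j) : ℕ) : ℝ)
      ≤ Real.exp (lam * (μ - δ)) *
        ∑ j ∈ Finset.range (k+1),
          ((k.choose j * (m_a + m_b - k).choose (m_b - j) : ℕ) : ℝ) * x^j := by
    calc ((∑ j ∈ J, k.choose j * (m_a + m_b - k).choose (m_b - j) : ℕ) : ℝ)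
        = ∑ j ∈ J, ((k.choose j * (m_a + m_b - k).choose (m_b - j) : ℕ) : ℝ) :=
          Nat.cast_sum _ _
      _ ≤ ∑ j ∈ J, Real.exp (lam * (μ - δ)) *
            (((k.choose j * (m_a + m_b - k).choose (m_b - j) : ℕ) : ℝ) * x^j) :=
          Finset.sum_le_sum hfbound
      _ = Real.exp (lam * (μ - δ)) * ∑ j ∈ J,
            (((k.choose j * (m_a + m_b - k).choose (m_b - j) : ℕ) : ℝ) * x^j) :=
          (Finset.mul_sum _ _ _).symm
      _ ≤ _ := by
          apply mul_le_mul_of_nonneg_left _ (le_of_lt (Real.exp_pos _))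
          apply Finset.sum_le_sum_of_subset_of_nonneg
          · rw [hJ]; exact Finset.filter_subset _ _
          · intro j _ _
            positivity
  have hmgf := mgf_bound m_a m_b x hx0 hx1 k hka hkb
  -- Hoeffding step
  set p : ℝ := (m_b:ℝ) / ((m_a:ℝ) + (m_b:ℝ)) with hp
  have hp0 : 0 ≤ p := by rw [hp]; positivity
  have hp1 : p ≤ 1 := by
    rw [hp, div_le_one hm0]
    have : (0:ℝ) ≤ (m_a:ℝ) := Nat.cast_nonneg _
    linarith
  have hbase : ((m_a : ℝ) + (m_b : ℝ) * x) / ((m_a : ℝ) + (m_b : ℝ))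
      = (1 - p) + p * Real.exp (-lam) := by
    rw [hp, hx]
    field_simp
    ring
  have hhoef := hoeffding_scalar p hp0 hp1 (-lam) (by linarith)
  have hbase_le : ((m_a : ℝ) + (m_b : ℝ) * x) / ((m_a : ℝ) + (m_b : ℝ))
      ≤ Real.exp (p * (-lam) + lam^2 / 8) := by
    rw [hbase]
    convert hhoef using 3
    ring
  have hbase_nn : 0 ≤ ((m_a : ℝ) + (m_b : ℝ) * x) / ((m_a : ℝ) + (m_b : ℝ)) := by positivity
  have hpow : (((m_a : ℝ) + (m_b : ℝ) * x) / ((m_a : ℝ) + (m_b : ℝ)))^k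
      ≤ Real.exp ((k:ℝ) * (p * (-lam) + lam^2 / 8)) := by
    calc (((m_a : ℝ) + (m_b : ℝ) * x) / ((m_a : ℝ) + (m_b : ℝ)))^k
        ≤ (Real.exp (p * (-lam) + lam^2 / 8))^k :=
          pow_le_pow_left₀ hbase_nn hbase_le k
      _ = Real.exp ((k:ℝ) * (p * (-lam) + lam^2 / 8)) := by
          rw [← Real.exp_nat_mul]
  -- combine
  have hCpos : (0:ℕ) < (m_a + m_b).choose m_b := Nat.choose_pos (by omega)
  have hCR : (0:ℝ) < ((m_a + m_b).choose m_b : ℝ) := by exact_mod_cast hCpos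
  have hTcard : (T.card : ℝ) = ((m_a + m_b).choose m_b : ℝ) := by
    rw [hT, Finset.card_powersetCard, Nat.card_Icc]
    norm_num
  have hμp : μ = (k:ℝ) * p := by rw [hμ, hp]; ring
  have hexp : lam * (μ - δ) + (k:ℝ) * (p * (-lam) + lam^2 / 8) = -(2 * δ^2) / k := by
    rw [hμp, hlam]
    field_simp
    ring
  have hfinal_exp : Real.exp (-(2 * δ^2) / k) ≤ Real.exp (-(2 * (δ ^ 2 - 1)) / ((k : ℝ) + 1)) := by
    apply Real.exp_le_exp.mpr
    rw [div_le_div_iff₀ hkR (by linarith : (0:ℝ) < (k:ℝ)+1)]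
    linarith [sq_nonneg δ, hkR.le]
  -- final chain
  rw [div_le_iff₀ (by rw [hTcard]; exact hCR)]
  calc ((T.filter (fun S => ((S ∩ Finset.Icc 1 k).card : ℝ) ≤ μ - δ)).card : ℝ)
      = ((∑ j ∈ J, k.choose j * (m_a + m_b - k).choose (m_b - j) : ℕ) : ℝ) := by
        rw [hnum]
    _ ≤ Real.exp (lam * (μ - δ)) *
        ∑ j ∈ Finset.range (k+1),
          ((k.choose j * (m_a + m_b - k).choose (m_b - j) : ℕ) : ℝ) * x^j := hsumJ
    _ ≤ Real.exp (lam * (μ - δ)) * (((m_a + m_b).choose m_b : ℝ)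
        * (((m_a : ℝ) + (m_b : ℝ) * x) / ((m_a : ℝ) + (m_b : ℝ)))^k) :=
        mul_le_mul_of_nonneg_left hmgf (le_of_lt (Real.exp_pos _))
    _ ≤ Real.exp (lam * (μ - δ)) * (((m_a + m_b).choose m_b : ℝ)
        * Real.exp ((k:ℝ) * (p * (-lam) + lam^2 / 8))) := by
        apply mul_le_mul_of_nonneg_left _ (le_of_lt (Real.exp_pos _))
        exact mul_le_mul_of_nonneg_left hpow (le_of_lt hCR)
    _ = ((m_a + m_b).choose m_b : ℝ) * Real.exp (-(2 * δ^2) / k) := by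
        rw [← hexp, Real.exp_add]
        ring
    _ ≤ ((m_a + m_b).choose m_b : ℝ) * Real.exp (-(2 * (δ ^ 2 - 1)) / ((k : ℝ) + 1)) :=
        mul_le_mul_of_nonneg_left hfinal_exp (le_of_lt hCR)
    _ = Real.exp (-(2 * (δ ^ 2 - 1)) / ((k : ℝ) + 1)) * (T.card : ℝ) := by
        rw [hTcard]; ring
end
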